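/- Let d ≥ 3 and let Γ be the Odd graph O_{d+1}. For any vertex γ of Γ, |Γ_d(γ)| = C(d, m)·C(d+1, m), where m = d/2 if d is even and m = (d+1)/2 if d is odd. -/

import Mathlib

open Finset

/-- The vertices of the Odd graph `O_{d+1}`: the `d`-element subsets of a fixed
`(2d+1)`-element set. -/
abbrev OddVertex (d : ℕ) : Type := {s : Finset (Fin (2 * d + 1)) // s.card = d}

/-- The Odd graph `O_{d+1}`: two `d`-subsets of a `(2d+1)`-set are adjacent whenever
they are disjoint. -/
def oddGraph (d : ℕ) : SimpleGraph (OddVertex d) where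
  Adj α β := α ≠ β ∧ Disjoint (α : Finset (Fin (2 * d + 1))) (β : Finset (Fin (2 * d + 1)))
  symm := by
    constructor
    intro α β h
    exact ⟨h.1.symm, h.2.symm⟩
  loopless := by
    constructor
    intro α h
    exact h.1 rfl

namespace OddAux

variable {d : ℕ}

/-- intersection size with the base vertex -/
def intc (γ α : OddVertex d) : ℕ := ((γ : Finset (Fin (2 * d + 1))) ∩ (α : Finset (Fin (2 * d + 1)))).card

lemma intc_def (γ α : OddVertex d) :
    intc γ α = ((γ : Finset (Fin (2 * d + 1))) ∩ (α : Finset (Fin (2 * d + 1)))).card := rfl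

lemma intc_le (γ α : OddVertex d) : intc γ α ≤ d := by
  have h : (γ : Finset (Fin (2 * d + 1))) ∩ (α : Finset (Fin (2 * d + 1))) ⊆ γ :=
    Finset.inter_subset_left
  have := Finset.card_le_card h
  simpa [intc, γ.2] using this

lemma intc_self (γ : OddVertex d) : intc γ γ = d := by
  simp [intc, γ.2]

lemma eq_of_intc_eq (γ α : OddVertex d) (h : intc γ α = d) : α = γ := by
  have h1 : (γ : Finset (Fin (2 * d + 1))) ∩ α = γ := by
    apply Finset.eq_of_subset_of_card_le Finset.inter_subset_left
    rw [γ.2]; exact h.ge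
  have h2 : (γ : Finset (Fin (2 * d + 1))) ⊆ α := by
    rw [← h1]; exact Finset.inter_subset_right
  have : (γ : Finset (Fin (2 * d + 1))) = α :=
    Finset.eq_of_subset_of_card_le h2 (by rw [γ.2, α.2])
  exact Subtype.ext this.symm

/-- along an edge, intersection sizes with γ sum to `d` or `d-1`. -/
lemma step (γ : OddVertex d) {α β : OddVertex d} (h : (oddGraph d).Adj α β) :
    intc γ α + intc γ β ≤ d ∧ d ≤ intc γ α + intc γ β + 1 := by
  obtain ⟨-, hdisj⟩ := h
  rw [intc_def, intc_def]
  set A := (α : Finset (Fin (2 * d + 1)))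
  set B := (β : Finset (Fin (2 * d + 1)))
  set C := (γ : Finset (Fin (2 * d + 1)))
  have hAB : Disjoint (C ∩ A) (C ∩ B) :=
    hdisj.mono Finset.inter_subset_right Finset.inter_subset_right
  constructor
  · have : (C ∩ A) ∪ (C ∩ B) ⊆ C := by
      apply Finset.union_subset Finset.inter_subset_left Finset.inter_subset_left
    have := Finset.card_le_card this
    rw [Finset.card_union_of_disjoint hAB] at this
    have hCd : C.card = d := γ.2
    omega
  · -- C ⊆ (C∩A) ∪ (C∩B) ∪ (A ∪ B)ᶜ, and card (A∪B)ᶜ = 1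
    have hsub : C ⊆ (C ∩ A) ∪ (C ∩ B) ∪ (A ∪ B)ᶜ := by
      intro x hx
      simp only [Finset.mem_union, Finset.mem_inter, Finset.mem_compl]
      by_cases hA : x ∈ A
      · exact Or.inl (Or.inl ⟨hx, hA⟩)
      by_cases hB : x ∈ B
      · exact Or.inl (Or.inr ⟨hx, hB⟩)
      · exact Or.inr (by simp [hA, hB])
    have hcompl : ((A ∪ B)ᶜ : Finset (Fin (2 * d + 1))).card = 1 := by
      rw [Finset.card_compl, Finset.card_union_of_disjoint hdisj, α.2, β.2]
      simp [Fintype.card_fin]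
      omega
    have := Finset.card_le_card hsub
    have h2 := Finset.card_union_le ((C ∩ A) ∪ (C ∩ B)) ((A ∪ B)ᶜ)
    have h3 := Finset.card_union_le (C ∩ A) (C ∩ B)
    rw [γ.2] at this
    rw [hcompl] at h2
    omega

/-- existence of a neighbor with prescribed intersection size with γ. -/
lemma exists_adj (hd : 1 ≤ d) (γ α : OddVertex d) (j : ℕ)
    (h1 : d ≤ intc γ α + j + 1) (h2 : intc γ α + j ≤ d) :
    ∃ β : OddVertex d, (oddGraph d).Adj α β ∧ intc γ β = j := by
  set A := (α : Finset (Fin (2 * d + 1)))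
  set C := (γ : Finset (Fin (2 * d + 1)))
  set i := intc γ α with hi
  -- choose s ⊆ C \ A with card j
  have hCA : (C \ A).card = d - i := by
    have := Finset.card_sdiff_add_card_inter C A
    rw [γ.2] at this
    have hii : (C ∩ A).card = i := rfl
    omega
  obtain ⟨s, hsub, hs⟩ := Finset.exists_subset_card_eq (s := C \ A) (n := j)
    (by rw [hCA]; omega)
  -- choose t ⊆ (A ∪ C)ᶜ with card d - j
  have hAC : ((A ∪ C)ᶜ : Finset (Fin (2 * d + 1))).card = i + 1 := by
    rw [Finset.card_compl]
    have h3 := Finset.card_union_add_card_inter A C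
    rw [α.2, γ.2] at h3
    have hint : (A ∩ C).card = i := by
      rw [Finset.inter_comm]; rfl
    rw [hint] at h3
    have h4 : (A ∪ C).card ≤ Fintype.card (Fin (2 * d + 1)) :=
      Finset.card_le_univ _
    simp only [Fintype.card_fin] at *
    omega
  obtain ⟨t, htsub, ht⟩ := Finset.exists_subset_card_eq (s := (A ∪ C)ᶜ) (n := d - j)
    (by rw [hAC]; omega)
  have hst : Disjoint s t := by
    refine Finset.disjoint_left.mpr fun x hxs hxt => ?_
    have hxC : x ∈ C := (Finset.mem_sdiff.mp (hsub hxs)).1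
    have := htsub hxt
    simp only [Finset.mem_compl, Finset.mem_union] at this
    exact this (Or.inr hxC)
  have hcard : (s ∪ t).card = d := by
    rw [Finset.card_union_of_disjoint hst, hs, ht]; omega
  refine ⟨⟨s ∪ t, hcard⟩, ⟨?_, ?_⟩, ?_⟩
  · -- α ≠ β
    intro heq
    have : A = s ∪ t := congrArg Subtype.val heq
    have hAdisj : Disjoint A (s ∪ t) := by
      refine Finset.disjoint_union_right.mpr ⟨?_, ?_⟩
      · refine Finset.disjoint_left.mpr fun x hxA hxs => ?_
        exact (Finset.mem_sdiff.mp (hsub hxs)).2 hxA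
      · refine Finset.disjoint_left.mpr fun x hxA hxt => ?_
        have := htsub hxt
        simp only [Finset.mem_compl, Finset.mem_union] at this
        exact this (Or.inl hxA)
    rw [this] at hAdisj
    have hempty : (s ∪ t) = ∅ := by
      simpa using disjoint_self.mp hAdisj
    rw [hempty] at hcard
    simp at hcard
    omega
  · -- Disjoint A (s ∪ t)
    refine Finset.disjoint_union_right.mpr ⟨?_, ?_⟩
    · refine Finset.disjoint_left.mpr fun x hxA hxs => ?_
      exact (Finset.mem_sdiff.mp (hsub hxs)).2 hxA
    · refine Finset.disjoint_left.mpr fun x hxA hxt => ?_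
      have := htsub hxt
      simp only [Finset.mem_compl, Finset.mem_union] at this
      exact this (Or.inl hxA)
  · -- intc γ β = j
    show (C ∩ (s ∪ t)).card = j
    have : C ∩ (s ∪ t) = s := by
      rw [Finset.inter_union_distrib_left]
      have h1 : C ∩ s = s := Finset.inter_eq_right.mpr
        (fun x hx => (Finset.mem_sdiff.mp (hsub hx)).1)
      have h2 : C ∩ t = ∅ := by
        refine Finset.eq_empty_of_forall_notMem fun x hx => ?_
        obtain ⟨hxC, hxt⟩ := Finset.mem_inter.mp hx
        have := htsub hxt
        simp only [Finset.mem_compl, Finset.mem_union] at this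
        exact this (Or.inr hxC)
      rw [h1, h2, Finset.union_empty]
    rw [this, hs]

/-- upper bounds: walks of lengths `2(d-i)` and `2i+1` exist. -/
lemma walks (hd : 1 ≤ d) (γ : OddVertex d) : ∀ n : ℕ, ∀ α : OddVertex d,
    (2 * (d - intc γ α) ≤ n → ∃ w : (oddGraph d).Walk γ α, w.length = 2 * (d - intc γ α)) ∧
    (2 * intc γ α + 1 ≤ n → ∃ w : (oddGraph d).Walk γ α, w.length = 2 * intc γ α + 1) := by
  intro n
  induction n using Nat.strong_induction_on with
  | _ n ih =>
    intro α
    have hi := intc_le γ α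
    constructor
    · intro hn
      by_cases hd' : intc γ α = d
      · have : α = γ := eq_of_intc_eq γ α hd'
        subst this
        exact ⟨SimpleGraph.Walk.nil, by simp [hd']⟩
      · have hlt : intc γ α < d := lt_of_le_of_ne hi hd'
        obtain ⟨β, hadj, hβ⟩ := exists_adj hd γ α (d - intc γ α - 1) (by omega) (by omega)
        have hβle := intc_le γ β
        have hn' : 2 * intc γ β + 1 ≤ n - 1 := by omega
        obtain ⟨w, hw⟩ := (ih (n - 1) (by omega) β).2 hn'
        refine ⟨w.concat hadj.symm, ?_⟩
        rw [SimpleGraph.Walk.length_concat, hw, hβ]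
        omega
    · intro hn
      obtain ⟨β, hadj, hβ⟩ := exists_adj hd γ α (d - intc γ α) (by omega) (by omega)
      have hn' : 2 * (d - intc γ β) ≤ n - 1 := by omega
      obtain ⟨w, hw⟩ := (ih (n - 1) (by omega) β).1 hn'
      refine ⟨w.concat hadj.symm, ?_⟩
      rw [SimpleGraph.Walk.length_concat, hw, hβ]
      omega

/-- lower bound: any walk from α to γ has length at least min(2(d-i), 2i+1). -/
lemma lower (γ : OddVertex d) : ∀ {α : OddVertex d} (w : (oddGraph d).Walk α γ),
    2 * (d - intc γ α) ≤ w.length ∨ 2 * intc γ α + 1 ≤ w.length := by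
  intro α w
  induction w with
  | nil => left; simp [intc_self]
  | cons h p ih =>
    rename_i u v b
    have hs := step b h
    have h1 := intc_le b u
    have h2 := intc_le b v
    simp only [SimpleGraph.Walk.length_cons]
    omega

/-- the distance formula. -/
lemma dist_eq (hd : 1 ≤ d) (γ α : OddVertex d) :
    (oddGraph d).dist γ α = min (2 * (d - intc γ α)) (2 * intc γ α + 1) := by
  have hi := intc_le γ α
  apply le_antisymm
  · rcases le_total (2 * (d - intc γ α)) (2 * intc γ α + 1) with h | h
    · obtain ⟨w, hw⟩ := (walks hd γ (2 * (d - intc γ α)) α).1 le_rfl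
      calc (oddGraph d).dist γ α ≤ w.length := SimpleGraph.dist_le w
        _ = _ := by rw [hw]; omega
    · obtain ⟨w, hw⟩ := (walks hd γ (2 * intc γ α + 1) α).2 le_rfl
      calc (oddGraph d).dist γ α ≤ w.length := SimpleGraph.dist_le w
        _ = _ := by rw [hw]; omega
  · obtain ⟨w, hw⟩ := (walks hd γ (2 * (d - intc γ α)) α).1 le_rfl
    have hr : (oddGraph d).Reachable γ α := ⟨w⟩
    obtain ⟨p, hp⟩ := hr.exists_walk_length_eq_dist
    have := lower γ p.reverse
    rw [SimpleGraph.Walk.length_reverse, hp] at this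
    omega

lemma dist_eq_d_iff (hd : 1 ≤ d) (γ α : OddVertex d) :
    (oddGraph d).dist γ α = d ↔ intc γ α = (if Even d then d / 2 else (d - 1) / 2) := by
  rw [dist_eq hd γ α]
  have hi := intc_le γ α
  rcases Nat.even_or_odd d with he | ho
  · rw [if_pos he]
    obtain ⟨k, hk⟩ := he
    omega
  · have hne : ¬ Even d := Nat.not_even_iff_odd.mpr ho
    rw [if_neg hne]
    obtain ⟨k, hk⟩ := ho
    omega

end OddAux

open OddAux

/-- the `d`-th subconstituent of the Odd graph `O_{d+1}` (`d ≥ 3`) with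
respect to any vertex has exactly `C(d, m) * C(d+1, m)` vertices, where `m = d/2` for
even `d` and `m = (d+1)/2` for odd `d`. -/
theorem oddGraph_card_last_subconstituent (d : ℕ) (hd : 3 ≤ d) (m : ℕ)
    (hm : m = if Even d then d / 2 else (d + 1) / 2) (γ : OddVertex d) :
    Nat.card {α : OddVertex d | (oddGraph d).dist γ α = d}
      = d.choose m * (d + 1).choose m := by
  classical
  set i₀ : ℕ := if Even d then d / 2 else (d - 1) / 2 with hi₀
  have hset : {α : OddVertex d | (oddGraph d).dist γ α = d}
      = {α : OddVertex d | intc γ α = i₀} := by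
    ext α
    simp only [Set.mem_setOf_eq]
    exact dist_eq_d_iff (by omega) γ α
  rw [hset]
  -- count via bijection with pairs of subsets
  have hcard : Nat.card {α : OddVertex d | intc γ α = i₀}
      = ((Finset.univ.filter (fun α : OddVertex d => intc γ α = i₀)).card) := by
    rw [Nat.card_eq_fintype_card]
    exact (Fintype.card_subtype _)
  rw [hcard]
  have hi₀d : i₀ ≤ d := by
    rcases Nat.even_or_odd d with he | ho
    · rw [hi₀, if_pos he]; omega
    · rw [hi₀, if_neg (Nat.not_even_iff_odd.mpr ho)]; omega
  set C := (γ : Finset (Fin (2 * d + 1))) with hC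
  have hCcard : C.card = d := γ.2
  have hCccard : (Cᶜ : Finset (Fin (2 * d + 1))).card = d + 1 := by
    rw [Finset.card_compl, hCcard]
    simp [Fintype.card_fin]
    omega
  have key : (Finset.univ.filter (fun α : OddVertex d => intc γ α = i₀)).card
      = d.choose i₀ * (d + 1).choose (d - i₀) := by
    have hbij : (Finset.univ.filter (fun α : OddVertex d => intc γ α = i₀)).card
        = ((Finset.powersetCard i₀ C) ×ˢ (Finset.powersetCard (d - i₀) Cᶜ)).card := by
      refine Finset.card_bij' (fun α _ => (C ∩ α.1, α.1 \ C))
        (fun p hp => ⟨p.1 ∪ p.2, by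
          rw [Finset.mem_product, Finset.mem_powersetCard, Finset.mem_powersetCard] at hp
          obtain ⟨⟨hs1, hs2⟩, ht1, ht2⟩ := hp
          have hdisj : Disjoint p.1 p.2 := by
            refine Finset.disjoint_left.mpr fun x hx1 hx2 => ?_
            exact (Finset.mem_compl.mp (ht1 hx2)) (hs1 hx1)
          rw [Finset.card_union_of_disjoint hdisj, hs2, ht2]
          omega⟩) ?_ ?_ ?_ ?_
      · intro α hα
        rw [Finset.mem_filter] at hα
        rw [Finset.mem_product, Finset.mem_powersetCard, Finset.mem_powersetCard]
        refine ⟨⟨Finset.inter_subset_left, hα.2⟩, ?_, ?_⟩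
        · intro x hx
          exact Finset.mem_compl.mpr (Finset.mem_sdiff.mp hx).2
        · show (α.1 \ C).card = d - i₀
          have h1 := Finset.card_inter_add_card_sdiff α.1 C
          rw [α.2] at h1
          have h2 : (α.1 ∩ C).card = i₀ := by
            rw [Finset.inter_comm]
            exact hα.2
          omega
      · intro p hp
        rw [Finset.mem_product, Finset.mem_powersetCard, Finset.mem_powersetCard] at hp
        obtain ⟨⟨hs1, hs2⟩, ht1, ht2⟩ := hp
        rw [Finset.mem_filter]
        refine ⟨Finset.mem_univ _, ?_⟩
        show (C ∩ (p.1 ∪ p.2)).card = i₀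
        have : C ∩ (p.1 ∪ p.2) = p.1 := by
          rw [Finset.inter_union_distrib_left]
          have e1 : C ∩ p.1 = p.1 := Finset.inter_eq_right.mpr hs1
          have e2 : C ∩ p.2 = ∅ := by
            refine Finset.eq_empty_of_forall_notMem fun x hx => ?_
            obtain ⟨hxC, hxt⟩ := Finset.mem_inter.mp hx
            exact (Finset.mem_compl.mp (ht1 hxt)) hxC
          rw [e1, e2, Finset.union_empty]
        rw [this, hs2]
      · intro α hα
        apply Subtype.ext
        show (C ∩ α.1) ∪ (α.1 \ C) = α.1
        ext x
        simp only [Finset.mem_union, Finset.mem_inter, Finset.mem_sdiff]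
        tauto
      · intro p hp
        rw [Finset.mem_product, Finset.mem_powersetCard, Finset.mem_powersetCard] at hp
        obtain ⟨⟨hs1, hs2⟩, ht1, ht2⟩ := hp
        have e1 : C ∩ (p.1 ∪ p.2) = p.1 := by
          rw [Finset.inter_union_distrib_left]
          have e1 : C ∩ p.1 = p.1 := Finset.inter_eq_right.mpr hs1
          have e2 : C ∩ p.2 = ∅ := by
            refine Finset.eq_empty_of_forall_notMem fun x hx => ?_
            obtain ⟨hxC, hxt⟩ := Finset.mem_inter.mp hx
            exact (Finset.mem_compl.mp (ht1 hxt)) hxC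
          rw [e1, e2, Finset.union_empty]
        have e2 : (p.1 ∪ p.2) \ C = p.2 := by
          ext x
          simp only [Finset.mem_sdiff, Finset.mem_union]
          constructor
          · rintro ⟨h1 | h1, h2⟩
            · exact absurd (hs1 h1) h2
            · exact h1
          · intro hx
            exact ⟨Or.inr hx, Finset.mem_compl.mp (ht1 hx)⟩
        show (C ∩ (p.1 ∪ p.2), (p.1 ∪ p.2) \ C) = p
        rw [e1, e2]
    rw [hbij, Finset.card_product, Finset.card_powersetCard, Finset.card_powersetCard,
      hCcard, hCccard]
  rw [key]
  rcases Nat.even_or_odd d with he | ho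
  · have h1 : i₀ = d / 2 := by rw [hi₀, if_pos he]
    have h2 : m = d / 2 := by rw [hm, if_pos he]
    obtain ⟨k, hk⟩ := he
    rw [h1, h2]
    have e : d - d / 2 = d / 2 := by omega
    rw [e]
  · have hne : ¬ Even d := Nat.not_even_iff_odd.mpr ho
    have h1 : i₀ = (d - 1) / 2 := by rw [hi₀, if_neg hne]
    have h2 : m = (d + 1) / 2 := by rw [hm, if_neg hne]
    obtain ⟨k, hk⟩ := ho
    rw [h1, h2]
    have e1 : (d - 1) / 2 = k := by omega
    have e2 : (d + 1) / 2 = k + 1 := by omega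
    have e3 : d - k = k + 1 := by omega
    rw [e1, e2, e3]
    congr 1
    rw [← Nat.choose_symm (show k + 1 ≤ d by omega)]
    congr 1
    omega
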